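/- Let t₀ ∈ ℂ, let n ≥ 1 be a natural number, and let g be a function that is analytic on an open disc D centered at t₀ with g(t₀) = a ≠ 0. Suppose Q(t) := g(t)/(t − t₀)ⁿ is nonvanishing on D ∖ {t₀} and satisfies equation (DPIB): d²Q/dt² = −(1/Q)(dQ/dt)² + 3Q³ + t/(2Q) on D ∖ {t₀}. Then n = 1 and a² = 1, i.e. a = 1 or a = −1. -/

import Mathlib

open Metric Filter Topology

theorem DPIB_leading_order_painleve_test
    (t₀ : ℂ) (n : ℕ) (hn : 1 ≤ n)
    (r : ℝ) (hr : 0 < r) (g : ℂ → ℂ)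
    (hg : ∀ t ∈ Metric.ball t₀ r, AnalyticAt ℂ g t)
    (a : ℂ) (ha : g t₀ = a) (hane : a ≠ 0)
    (Q : ℂ → ℂ) (hQ : ∀ t, Q t = g t / (t - t₀) ^ n)
    (hQne : ∀ t ∈ Metric.ball t₀ r \ {t₀}, Q t ≠ 0)
    (hode : ∀ t ∈ Metric.ball t₀ r \ {t₀}, deriv (deriv Q) t =
      -(1 / Q t) * (deriv Q t) ^ 2 + 3 * (Q t) ^ 3 + t / (2 * Q t)) :
    n = 1 ∧ (a = 1 ∨ a = -1) := by
  obtain ⟨m, rfl⟩ : ∃ m, n = m + 1 := ⟨n - 1, (Nat.succ_pred_eq_of_pos hn).symm⟩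
  have hgON : AnalyticOnNhd ℂ g (Metric.ball t₀ r) := hg
  have hg1 : AnalyticOnNhd ℂ (deriv g) (Metric.ball t₀ r) := hgON.deriv
  have hg2 : AnalyticOnNhd ℂ (deriv (deriv g)) (Metric.ball t₀ r) := hg1.deriv
  have hQfun : Q = fun t => g t / (t - t₀) ^ (m + 1) := funext hQ
  set s : Set ℂ := Metric.ball t₀ r \ {t₀} with hs
  have hsopen : IsOpen s := isOpen_ball.sdiff isClosed_singleton
  -- first derivative
  have hderivQ : ∀ t ∈ s, deriv Q t =
      (deriv g t * (t - t₀) - (m + 1 : ℕ) * g t) / (t - t₀) ^ (m + 2) := by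
    intro t ht
    have hu : t - t₀ ≠ 0 := sub_ne_zero.2 ht.2
    have hgd : HasDerivAt g (deriv g t) t := ((hg t ht.1).differentiableAt).hasDerivAt
    have hud : HasDerivAt (fun x => x - t₀) 1 t := (hasDerivAt_id t).sub_const t₀
    have hpow : HasDerivAt (fun x => (x - t₀) ^ (m + 1))
        (((m + 1 : ℕ) : ℂ) * (t - t₀) ^ m * 1) t := by
      simpa using hud.fun_pow (m + 1)
    have hdne : (t - t₀) ^ (m + 1) ≠ 0 := pow_ne_zero _ hu
    have h := (hgd.div hpow hdne)
    have h2 : HasDerivAt Q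
        ((deriv g t * (t - t₀) ^ (m + 1) - g t * (((m + 1 : ℕ) : ℂ) * (t - t₀) ^ m * 1)) /
          ((t - t₀) ^ (m + 1)) ^ 2) t := by
      rw [hQfun]; exact h
    rw [h2.deriv]
    field_simp
    ring
  -- second derivative
  have hD1 : ∀ t ∈ s, HasDerivAt (fun x => (deriv g x * (x - t₀) - (m + 1 : ℕ) * g x) / (x - t₀) ^ (m + 2))
      ((deriv (deriv g) t * (t - t₀) ^ 2 - 2 * ((m + 1 : ℕ) : ℂ) * deriv g t * (t - t₀)
        + ((m + 1 : ℕ) : ℂ) * ((m + 2 : ℕ) : ℂ) * g t) / (t - t₀) ^ (m + 3)) t := by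
    intro t ht
    have hu : t - t₀ ≠ 0 := sub_ne_zero.2 ht.2
    have hgd : HasDerivAt g (deriv g t) t := ((hg t ht.1).differentiableAt).hasDerivAt
    have hg1d : HasDerivAt (deriv g) (deriv (deriv g) t) t :=
      ((hg1 t ht.1).differentiableAt).hasDerivAt
    have hud : HasDerivAt (fun x => x - t₀) 1 t := (hasDerivAt_id t).sub_const t₀
    have hnum : HasDerivAt (fun x => deriv g x * (x - t₀) - (m + 1 : ℕ) * g x)
        (deriv (deriv g) t * (t - t₀) + deriv g t * 1 - ((m + 1 : ℕ) : ℂ) * deriv g t) t :=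
      (hg1d.mul hud).sub (HasDerivAt.const_mul _ hgd)
    have hpow : HasDerivAt (fun x => (x - t₀) ^ (m + 2))
        (((m + 2 : ℕ) : ℂ) * (t - t₀) ^ (m + 1) * 1) t := by
      simpa using hud.fun_pow (m + 2)
    have hdne : (t - t₀) ^ (m + 2) ≠ 0 := pow_ne_zero _ hu
    have h : HasDerivAt (fun x => (deriv g x * (x - t₀) - (m + 1 : ℕ) * g x) / (x - t₀) ^ (m + 2)) _ t :=
      hnum.fun_div hpow hdne
    convert h using 1
    field_simp
    push_cast
    ring
  have hderiv2 : ∀ t ∈ s, deriv (deriv Q) t =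
      (deriv (deriv g) t * (t - t₀) ^ 2 - 2 * ((m + 1 : ℕ) : ℂ) * deriv g t * (t - t₀)
        + ((m + 1 : ℕ) : ℂ) * ((m + 2 : ℕ) : ℂ) * g t) / (t - t₀) ^ (m + 3) := by
    intro t ht
    have heq : deriv Q =ᶠ[𝓝 t]
        fun x => (deriv g x * (x - t₀) - (m + 1 : ℕ) * g x) / (x - t₀) ^ (m + 2) := by
      filter_upwards [hsopen.mem_nhds ht] with x hx using hderivQ x hx
    rw [heq.deriv_eq]
    exact (hD1 t ht).deriv
  -- key polynomial identity on the punctured ball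
  set F : ℂ → ℂ := fun t =>
      g t * (deriv (deriv g) t * (t - t₀) ^ 2 - 2 * ((m + 1 : ℕ) : ℂ) * deriv g t * (t - t₀)
        + ((m + 1 : ℕ) : ℂ) * ((m + 2 : ℕ) : ℂ) * g t)
      + (deriv g t * (t - t₀) - ((m + 1 : ℕ) : ℂ) * g t) ^ 2 with hF
  have key : ∀ t ∈ s, (t - t₀) ^ (2 * m) * F t
      = 3 * g t ^ 4 + t / 2 * (t - t₀) ^ (4 * m + 4) := by
    intro t ht
    have hu : t - t₀ ≠ 0 := sub_ne_zero.2 ht.2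
    have hQn : Q t ≠ 0 := hQne t ht
    have h2 : Q t * deriv (deriv Q) t + (deriv Q t) ^ 2 = 3 * (Q t) ^ 4 + t / 2 := by
      rw [hode t ht]
      field_simp
      ring
    rw [hderiv2 t ht, hderivQ t ht, hQ t] at h2
    rw [hF]
    calc (t - t₀) ^ (2 * m) *
        (g t * (deriv (deriv g) t * (t - t₀) ^ 2 - 2 * ((m + 1 : ℕ) : ℂ) * deriv g t * (t - t₀)
          + ((m + 1 : ℕ) : ℂ) * ((m + 2 : ℕ) : ℂ) * g t)
        + (deriv g t * (t - t₀) - ((m + 1 : ℕ) : ℂ) * g t) ^ 2)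
        = (g t / (t - t₀) ^ (m + 1) *
            ((deriv (deriv g) t * (t - t₀) ^ 2 - 2 * ((m + 1 : ℕ) : ℂ) * deriv g t * (t - t₀)
              + ((m + 1 : ℕ) : ℂ) * ((m + 2 : ℕ) : ℂ) * g t) / (t - t₀) ^ (m + 3))
          + ((deriv g t * (t - t₀) - ((m + 1 : ℕ) : ℂ) * g t) / (t - t₀) ^ (m + 2)) ^ 2)
          * (t - t₀) ^ (4 * m + 4) := by field_simp; ring
      _ = (3 * (g t / (t - t₀) ^ (m + 1)) ^ 4 + t / 2) * (t - t₀) ^ (4 * m + 4) := by rw [h2]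
      _ = 3 * g t ^ 4 + t / 2 * (t - t₀) ^ (4 * m + 4) := by field_simp; ring
  -- continuity of both sides at t₀
  have h0 : t₀ ∈ Metric.ball t₀ r := mem_ball_self hr
  have cg : ContinuousAt g t₀ := (hg t₀ h0).continuousAt
  have cg1 : ContinuousAt (deriv g) t₀ := (hg1 t₀ h0).continuousAt
  have cg2 : ContinuousAt (deriv (deriv g)) t₀ := (hg2 t₀ h0).continuousAt
  have cL : ContinuousAt (fun t => (t - t₀) ^ (2 * m) * F t) t₀ := by
    rw [hF]; fun_prop
  have cR : ContinuousAt (fun t => 3 * g t ^ 4 + t / 2 * (t - t₀) ^ (4 * m + 4)) t₀ := by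
    fun_prop
  have hmem : s ∈ 𝓝[≠] t₀ := diff_mem_nhdsWithin_compl (Metric.ball_mem_nhds t₀ hr) {t₀}
  have hval : (t₀ - t₀) ^ (2 * m) * F t₀
      = 3 * g t₀ ^ 4 + t₀ / 2 * (t₀ - t₀) ^ (4 * m + 4) := by
    have hlim1 : Filter.Tendsto (fun t => (t - t₀) ^ (2 * m) * F t) (𝓝[≠] t₀)
        (𝓝 ((t₀ - t₀) ^ (2 * m) * F t₀)) := cL.tendsto.mono_left nhdsWithin_le_nhds
    have hlim2 : Filter.Tendsto (fun t => (t - t₀) ^ (2 * m) * F t) (𝓝[≠] t₀)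
        (𝓝 (3 * g t₀ ^ 4 + t₀ / 2 * (t₀ - t₀) ^ (4 * m + 4))) := by
      refine Filter.Tendsto.congr' ?_ (cR.tendsto.mono_left nhdsWithin_le_nhds)
      exact Filter.eventuallyEq_of_mem hmem fun t ht => (key t ht).symm
    exact tendsto_nhds_unique hlim1 hlim2
  rw [sub_self, ha] at hval
  have hz : (0 : ℂ) ^ (4 * m + 4) = 0 := zero_pow (by omega)
  rw [hz, mul_zero, add_zero] at hval
  rcases m with _ | k
  · -- m = 0 : n = 1
    simp only [hF, sub_self, ha] at hval
    norm_num at hval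
    have h4 : a ^ 2 * ((a - 1) * (a + 1)) = 0 := by linear_combination (-1/3 : ℂ) * hval
    rcases mul_eq_zero.1 h4 with h5 | h5
    · exact absurd (pow_eq_zero_iff (two_ne_zero) |>.1 h5) hane
    · rcases mul_eq_zero.1 h5 with h6 | h6
      · exact ⟨rfl, Or.inl (by linear_combination h6)⟩
      · exact ⟨rfl, Or.inr (by linear_combination h6)⟩
  · -- m = k + 1 : contradiction
    rw [zero_pow (by omega), zero_mul] at hval
    have h4 : (3 : ℂ) * a ^ 4 ≠ 0 :=
      mul_ne_zero (by norm_num) (pow_ne_zero _ hane)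
    exact absurd hval.symm h4
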